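/- Every real skew-symmetric matrix A of order n can be factored as A = Q M Qᵀ, where Q is orthogonal and M is lower antitriangular (all entries strictly above the main antidiagonal are zero), and M is itself skew-symmetric. -/

import Mathlib

open Matrix ComplexOrder

private lemma sum_middle' {n : ℕ} (hn : 2 ≤ n) (f : Fin n → ℝ)
    (hf : ∀ i : Fin n, ((i : ℕ) = 0 ∨ (i : ℕ) = n - 1) → f i = 0) :
    ∑ i, f i = ∑ a : Fin (n - 2), f ⟨a + 1, by omega⟩ := by
  trans ∑ i ∈ Finset.univ.map ⟨fun a : Fin (n-2) => (⟨a + 1, by omega⟩ : Fin n), by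
      intro a b h; simpa [Fin.ext_iff] using h⟩, f i
  · symm
    apply Finset.sum_subset (Finset.subset_univ _)
    intro i _ hi
    apply hf
    by_contra hc
    push_neg at hc
    apply hi
    simp only [Finset.mem_map, Finset.mem_univ, true_and, Function.Embedding.coeFn_mk]
    exact ⟨⟨(i : ℕ) - 1, by omega⟩, Fin.ext (by show (i : ℕ) - 1 + 1 = i; omega)⟩
  · rw [Finset.sum_map]
    rfl

private lemma skew_selfdot' {n : ℕ} {A : Matrix (Fin n) (Fin n) ℝ} (hA : Aᵀ = -A)
    (x : Fin n → ℝ) : x ⬝ᵥ (A *ᵥ x) = 0 := by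
  have h1 : x ⬝ᵥ (A *ᵥ x) = (Aᵀ *ᵥ x) ⬝ᵥ x := by
    rw [Matrix.dotProduct_mulVec, Matrix.mulVec_transpose]
  rw [hA] at h1
  simp [Matrix.neg_mulVec, dotProduct_comm] at h1
  linarith

private lemma dot_shift' {n : ℕ} (A : Matrix (Fin n) (Fin n) ℝ) (x y : Fin n → ℝ) :
    x ⬝ᵥ (A *ᵥ y) = (Aᵀ *ᵥ x) ⬝ᵥ y := by
  rw [Matrix.dotProduct_mulVec, Matrix.mulVec_transpose]

private lemma triple_apply' {k : ℕ} (X Y Z : Matrix (Fin k) (Fin k) ℝ) (i j : Fin k) :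
    (Xᵀ * Y * Z) i j = ∑ c, (∑ a, X a i * Y a c) * Z c j := by
  rw [Matrix.mul_apply]
  refine Finset.sum_congr rfl fun c _ => ?_
  rw [Matrix.mul_apply]
  simp only [Matrix.transpose_apply]

set_option maxHeartbeats 8000000 in
private lemma aux' : ∀ n : ℕ, ∀ A : Matrix (Fin n) (Fin n) ℝ, Aᵀ = -A →
    ∃ Q : Matrix (Fin n) (Fin n) ℝ, Qᵀ * Q = 1 ∧
      ∀ i j : Fin n, (i : ℕ) + (j : ℕ) + 2 ≤ n → (Qᵀ * A * Q) i j = 0 := by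
  intro n
  induction n using Nat.strong_induction_on with
  | _ n IH =>
  intro A hA
  by_cases hA0 : A = 0
  · exact ⟨1, by simp, by simp [hA0]⟩
  have hex : ∃ i j, A i j ≠ 0 := by
    by_contra h
    push_neg at h
    exact hA0 (by ext i j; simpa using h i j)
  obtain ⟨i0, j0, hij0⟩ := hex
  have hdiag : ∀ i, A i i = 0 := by
    intro i
    have := congrFun (congrFun hA i) i
    simp only [Matrix.transpose_apply, Matrix.neg_apply] at this
    linarith
  have hn2 : 2 ≤ n := by
    by_contra h
    push_neg at h
    have hn1 : n = 1 := by have := i0.2; omega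
    subst hn1
    have : i0 = j0 := Subsingleton.elim _ _
    rw [this] at hij0
    exact hij0 (hdiag j0)
  -- the two distinguished vectors
  obtain ⟨vE, hvE⟩ : ∃ vE : EuclideanSpace ℝ (Fin n),
      vE = fun i => if i = j0 then (1 : ℝ) else 0 :=
      ⟨WithLp.toLp 2 (fun i => if i = j0 then (1 : ℝ) else 0), rfl⟩
  obtain ⟨wE, hwE⟩ : ∃ wE : EuclideanSpace ℝ (Fin n), wE = A *ᵥ vE := ⟨WithLp.toLp 2 (A *ᵥ vE), rfl⟩
  have hw0 : wE ≠ 0 := by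
    intro h
    apply hij0
    have h2 : wE i0 = 0 := by rw [h]; rfl
    rw [hwE] at h2
    simpa [Matrix.mulVec, dotProduct, hvE, mul_ite] using h2
  have hcne : ‖wE‖ ≠ 0 := norm_ne_zero_iff.mpr hw0
  obtain ⟨u2, hu2⟩ : ∃ u2 : EuclideanSpace ℝ (Fin n), u2 = ‖wE‖⁻¹ • wE := ⟨_, rfl⟩
  have hdotE : ∀ x y : EuclideanSpace ℝ (Fin n),
      (inner ℝ x y : ℝ) = (x : Fin n → ℝ) ⬝ᵥ (y : Fin n → ℝ) := by
    intro x y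
    simp [PiLp.inner_apply, dotProduct, RCLike.inner_apply]
    exact Finset.sum_congr rfl fun _ _ => mul_comm _ _
  have hu1norm : ‖vE‖ = 1 := by
    have h1 : ∑ i, ‖vE i‖ ^ 2 = 1 := by
      simp [hvE, apply_ite (fun x : ℝ => ‖x‖ ^ 2)]
    rw [EuclideanSpace.norm_eq, h1, Real.sqrt_one]
  have hu2norm : ‖u2‖ = 1 := by
    rw [hu2, norm_smul, norm_inv, norm_norm, inv_mul_cancel₀ hcne]
  have hu12 : (inner ℝ vE u2 : ℝ) = 0 := by
    rw [hu2, inner_smul_right, hdotE, hwE]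
    rw [skew_selfdot' hA vE, mul_zero]
  -- distinguished indices
  obtain ⟨z, hz⟩ : ∃ z : Fin n, z = ⟨0, by omega⟩ := ⟨_, rfl⟩
  obtain ⟨ln, hln⟩ : ∃ ln : Fin n, ln = ⟨n - 1, by omega⟩ := ⟨_, rfl⟩
  have hzln : z ≠ ln := by
    rw [hz, hln]
    intro h
    have := congrArg Fin.val h
    simp at this
    omega
  -- orthonormal basis extension
  obtain ⟨vf, hvf⟩ : ∃ vf : Fin n → EuclideanSpace ℝ (Fin n),
      vf = fun i => if i = z then vE else u2 := ⟨_, rfl⟩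
  have hvfz : vf z = vE := by
    rw [hvf]
    simp
  have hvfln : vf ln = u2 := by
    rw [hvf]
    simp [Ne.symm hzln]
  have horth : Orthonormal ℝ (({z, ln} : Set (Fin n)).restrict vf) := by
    rw [orthonormal_iff_ite]
    rintro ⟨i, hi⟩ ⟨j, hj⟩
    simp only [Set.mem_insert_iff, Set.mem_singleton_iff] at hi hj
    change inner ℝ (vf i) (vf j) = _
    rcases hi with rfl | rfl <;> rcases hj with rfl | rfl
    · rw [if_pos rfl, hvfz, real_inner_self_eq_norm_sq, hu1norm]
      norm_num
    · rw [if_neg (fun h => hzln (congrArg Subtype.val h)), hvfz, hvfln]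
      exact hu12
    · rw [if_neg (fun h => hzln (congrArg Subtype.val h.symm)), hvfz, hvfln, real_inner_comm]
      exact hu12
    · rw [if_pos rfl, hvfln, real_inner_self_eq_norm_sq, hu2norm]
      norm_num
  obtain ⟨b, hb⟩ := horth.exists_orthonormalBasis_extension_of_card_eq
    (by simp [finrank_euclideanSpace])
  have hbz : b z = vE := by
    have := hb z (by simp)
    rw [hvf] at this
    simpa using this
  have hbln : b ln = u2 := by
    have := hb ln (by simp)
    rw [hvf] at this
    simpa [hzln.symm] using this
  -- first orthogonal matrix, columns are the basis vectors
  obtain ⟨Q1, hQ1⟩ : ∃ Q1 : Matrix (Fin n) (Fin n) ℝ, Q1 = fun i k => b k i := ⟨_, rfl⟩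
  have hQ1orth : Q1ᵀ * Q1 = 1 := by
    ext k l
    have h := orthonormal_iff_ite.mp b.orthonormal k l
    rw [hdotE] at h
    simp only [Matrix.mul_apply, Matrix.transpose_apply, hQ1, Matrix.one_apply]
    rw [← h]; rfl
  obtain ⟨M1, hM1⟩ : ∃ M1 : Matrix (Fin n) (Fin n) ℝ, M1 = Q1ᵀ * A * Q1 := ⟨_, rfl⟩
  have hM1skew : M1ᵀ = -M1 := by
    rw [hM1, Matrix.transpose_mul, Matrix.transpose_mul, Matrix.transpose_transpose, hA]
    simp [Matrix.mul_assoc]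
  have hM1entry : ∀ k l, M1 k l = (b k : Fin n → ℝ) ⬝ᵥ (A *ᵥ (b l : Fin n → ℝ)) := by
    intro k l
    rw [hM1, triple_apply']
    simp only [hQ1, dotProduct, Matrix.mulVec, dotProduct, Finset.mul_sum, Finset.sum_mul]
    rw [Finset.sum_comm]
    exact Finset.sum_congr rfl fun i _ => Finset.sum_congr rfl fun j _ => by ring
  have hrow : ∀ l, l ≠ ln → M1 z l = 0 := by
    intro l hl
    have hwu2 : wE = ‖wE‖ • u2 := by
      rw [hu2, smul_smul, mul_inv_cancel₀ hcne, one_smul]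
    rw [hM1entry, hbz]
    rw [dot_shift', hA, Matrix.neg_mulVec, neg_dotProduct, ← hwE]
    rw [← hdotE wE (b l), hwu2, real_inner_smul_left, ← hbln]
    rw [b.orthonormal.2 (Ne.symm hl), mul_zero, neg_zero]
  have hcol : ∀ l, l ≠ ln → M1 l z = 0 := by
    intro l hl
    have h := congrFun (congrFun hM1skew z) l
    simp only [Matrix.transpose_apply, Matrix.neg_apply] at h
    rw [hrow l hl] at h
    linarith
  -- recursion on the middle block
  obtain ⟨B, hB⟩ : ∃ B : Matrix (Fin (n - 2)) (Fin (n - 2)) ℝ,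
      B = fun (a c : Fin (n - 2)) =>
        M1 ⟨(a : ℕ) + 1, by omega⟩ ⟨(c : ℕ) + 1, by omega⟩ := ⟨_, rfl⟩
  have hBskew : Bᵀ = -B := by
    ext a c
    have h := congrFun (congrFun hM1skew ⟨(a : ℕ) + 1, by omega⟩) ⟨(c : ℕ) + 1, by omega⟩
    simp only [Matrix.transpose_apply, Matrix.neg_apply] at h
    simp only [Matrix.transpose_apply, Matrix.neg_apply, hB]
    exact h
  obtain ⟨QB, hQBorth, hQBanti⟩ := IH (n - 2) (by omega) B hBskew
  -- the middle-block orthogonal matrix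
  obtain ⟨P, hP⟩ : ∃ P : Matrix (Fin n) (Fin n) ℝ, P = fun (i j : Fin n) =>
      if h : 1 ≤ (i : ℕ) ∧ (i : ℕ) ≤ n - 2 ∧ 1 ≤ (j : ℕ) ∧ (j : ℕ) ≤ n - 2 then
        QB ⟨(i : ℕ) - 1, by omega⟩ ⟨(j : ℕ) - 1, by omega⟩
      else if i = j then 1 else 0 := ⟨_, rfl⟩
  have hPmid : ∀ (a : Fin (n - 2)) (i : Fin n) (h1 : 1 ≤ (i : ℕ)) (h2 : (i : ℕ) ≤ n - 2),
      P ⟨a + 1, by omega⟩ i = QB a ⟨(i : ℕ) - 1, by omega⟩ := by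
    intro a i h1 h2
    rw [hP]
    simp only
    rw [dif_pos ⟨show 1 ≤ (a : ℕ) + 1 by omega, show (a : ℕ) + 1 ≤ n - 2 by omega, h1, h2⟩]
    congr 1
  have hPout : ∀ i j : Fin n, ¬(1 ≤ (j : ℕ) ∧ (j : ℕ) ≤ n - 2) →
      P i j = if i = j then 1 else 0 := by
    intro i j hj
    rw [hP]
    simp only
    rw [dif_neg (by tauto)]
  have hPout' : ∀ i j : Fin n, ¬(1 ≤ (i : ℕ) ∧ (i : ℕ) ≤ n - 2) →
      P i j = if i = j then 1 else 0 := by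
    intro i j hi
    rw [hP]
    simp only
    rw [dif_neg (by tauto)]
  have hPorth : Pᵀ * P = 1 := by
    ext j k
    simp only [Matrix.mul_apply, Matrix.transpose_apply]
    by_cases hj : 1 ≤ (j : ℕ) ∧ (j : ℕ) ≤ n - 2
    · by_cases hk : 1 ≤ (k : ℕ) ∧ (k : ℕ) ≤ n - 2
      · rw [sum_middle' hn2 _ (by
          intro i hi
          have h0 : P i j = 0 := by
            rw [hPout' i j (by omega)]
            rw [if_neg (by intro h; subst h; omega)]
          rw [h0, zero_mul])]
        have key : ∀ a : Fin (n - 2), P ⟨a + 1, by omega⟩ j * P ⟨a + 1, by omega⟩ k =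
            QB a ⟨(j : ℕ) - 1, by omega⟩ * QB a ⟨(k : ℕ) - 1, by omega⟩ := by
          intro a
          rw [hPmid a j hj.1 hj.2, hPmid a k hk.1 hk.2]
        rw [Finset.sum_congr rfl fun a _ => key a]
        have h := congrFun (congrFun hQBorth ⟨(j : ℕ) - 1, by omega⟩) ⟨(k : ℕ) - 1, by omega⟩
        simp only [Matrix.mul_apply, Matrix.transpose_apply] at h
        rw [h, Matrix.one_apply, Matrix.one_apply]
        by_cases hjk : j = k
        · subst hjk
          simp
        · rw [if_neg hjk, if_neg (by
            intro h2
            apply hjk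
            have h3 := congrArg Fin.val h2
            simp only [Fin.val_mk] at h3
            rw [Fin.ext_iff]
            omega)]
      · have hPk : ∀ i, P i k = if i = k then 1 else 0 := fun i => hPout i k hk
        rw [Finset.sum_congr rfl fun i _ => by rw [hPk i]]
        rw [Finset.sum_eq_single k (fun i _ hik => by rw [if_neg hik, mul_zero])
          (fun h => absurd (Finset.mem_univ k) h)]
        rw [if_pos rfl, mul_one]
        have hjk : j ≠ k := by
          intro h
          subst h
          exact hk hj
        rw [hPout' k j (by omega), if_neg (Ne.symm hjk), Matrix.one_apply, if_neg hjk]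
    · have hPj : ∀ i, P i j = if i = j then 1 else 0 := fun i => hPout i j hj
      rw [Finset.sum_congr rfl fun i _ => by rw [hPj i]]
      rw [Finset.sum_eq_single j (fun i _ hij => by rw [if_neg hij, zero_mul])
        (fun h => absurd (Finset.mem_univ j) h)]
      rw [if_pos rfl, one_mul, hPout' j k hj, Matrix.one_apply]
  refine ⟨Q1 * P, ?_, ?_⟩
  · rw [Matrix.transpose_mul, Matrix.mul_assoc, ← Matrix.mul_assoc Q1ᵀ, hQ1orth,
      Matrix.one_mul, hPorth]
  · intro i j hij
    have hfact : ((Q1 * P)ᵀ * A * (Q1 * P)) = Pᵀ * M1 * P := by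
      rw [hM1, Matrix.transpose_mul]
      noncomm_ring
    rw [hfact, triple_apply']
    by_cases hi0 : (i : ℕ) = 0
    · have hiz : i = z := by
        rw [hz, Fin.ext_iff]
        exact hi0
      have hinner : ∀ c, (∑ a, P a i * M1 a c) = M1 i c := by
        intro c
        have hPi : ∀ a, P a i = if a = i then 1 else 0 := fun a => hPout a i (by omega)
        rw [Finset.sum_congr rfl fun a _ => by rw [hPi a]]
        rw [Finset.sum_eq_single i (fun a _ ha => by rw [if_neg ha, zero_mul])
          (fun h => absurd (Finset.mem_univ i) h), if_pos rfl, one_mul]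
      rw [Finset.sum_congr rfl fun c _ => by rw [hinner c]]
      apply Finset.sum_eq_zero
      intro c _
      by_cases hc : c = ln
      · have hjln : j ≠ ln := by
          rw [hln]
          intro h
          have := congrArg Fin.val h
          simp only [Fin.val_mk] at this
          omega
        have hlnnot : ¬(1 ≤ (ln : ℕ) ∧ (ln : ℕ) ≤ n - 2) := by
          rw [hln]
          simp only [Fin.val_mk]
          omega
        rw [hc, hPout' ln j hlnnot, if_neg (fun h => hjln h.symm), mul_zero]
      · rw [hiz, hrow c hc, zero_mul]
    · by_cases hj0 : (j : ℕ) = 0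
      · have hjz : j = z := by
          rw [hz, Fin.ext_iff]
          exact hj0
        have hPj : ∀ c, P c j = if c = j then 1 else 0 := fun c => hPout c j (by omega)
        rw [Finset.sum_congr rfl fun c _ => by rw [hPj c]]
        rw [Finset.sum_eq_single j (fun c _ hc => by rw [if_neg hc, mul_zero])
          (fun h => absurd (Finset.mem_univ j) h), if_pos rfl, mul_one]
        apply Finset.sum_eq_zero
        intro a _
        by_cases ha : a = ln
        · have hiln : i ≠ ln := by
            rw [hln]
            intro h
            have := congrArg Fin.val h
            simp only [Fin.val_mk] at this
            omega
          have hlnnot : ¬(1 ≤ (ln : ℕ) ∧ (ln : ℕ) ≤ n - 2) := by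
            rw [hln]
            simp only [Fin.val_mk]
            omega
          rw [ha, hPout' ln i hlnnot, if_neg (fun h => hiln h.symm), zero_mul]
        · rw [hjz, hcol a ha, mul_zero]
      · -- both indices are in the middle block
        have hi1 : 1 ≤ (i : ℕ) := by omega
        have hi2 : (i : ℕ) ≤ n - 2 := by omega
        have hj1 : 1 ≤ (j : ℕ) := by omega
        have hj2 : (j : ℕ) ≤ n - 2 := by omega
        rw [sum_middle' hn2 _ (by
          intro c hc
          have h0 : P c j = 0 := by
            rw [hPout' c j (by omega), if_neg (by intro h; subst h; omega)]
          rw [h0, mul_zero])]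
        have hstep : ∀ c : Fin (n - 2),
            (∑ a, P a i * M1 a ⟨c + 1, by omega⟩) =
            ∑ a' : Fin (n - 2), QB a' ⟨(i : ℕ) - 1, by omega⟩ * B a' c := by
          intro c
          rw [sum_middle' hn2 _ (by
            intro a ha
            have h0 : P a i = 0 := by
              rw [hPout' a i (by omega), if_neg (by intro h; subst h; omega)]
            rw [h0, zero_mul])]
          refine Finset.sum_congr rfl fun a' _ => ?_
          rw [hPmid a' i hi1 hi2, hB]
        have hfin : ∑ c : Fin (n - 2), (∑ a, P a i * M1 a ⟨c + 1, by omega⟩) *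
            P ⟨c + 1, by omega⟩ j =
            (QBᵀ * B * QB) ⟨(i : ℕ) - 1, by omega⟩ ⟨(j : ℕ) - 1, by omega⟩ := by
          rw [triple_apply']
          refine Finset.sum_congr rfl fun c _ => ?_
          rw [hstep c, hPmid c j hj1 hj2]
        rw [hfin]
        exact hQBanti _ _ (by simp only [Fin.val_mk]; omega)

theorem skew_symmetric_antitriangular_factorization {n : ℕ}
    (A : Matrix (Fin n) (Fin n) ℝ) (hA : Aᵀ = -A) :
    ∃ Q M : Matrix (Fin n) (Fin n) ℝ,
      Qᵀ * Q = 1 ∧ Mᵀ = -M ∧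
      (∀ i j : Fin n, (i : ℕ) + (j : ℕ) + 2 ≤ n → M i j = 0) ∧
      A = Q * M * Qᵀ := by
  obtain ⟨Q, hQ, hanti⟩ := aux' n A hA
  refine ⟨Q, Qᵀ * A * Q, hQ, ?_, hanti, ?_⟩
  · rw [Matrix.transpose_mul, Matrix.transpose_mul, Matrix.transpose_transpose, hA]
    simp [Matrix.mul_assoc]
  · have hQQ : Q * Qᵀ = 1 := mul_eq_one_comm.mp hQ
    rw [show Q * (Qᵀ * A * Q) * Qᵀ = (Q * Qᵀ) * A * (Q * Qᵀ) from by noncomm_ring, hQQ,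
      Matrix.one_mul, Matrix.mul_one]
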